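/- If f : ℝ^d → ℝ is L-smooth, then for all x: ‖∇f(x)‖² ≤ 2‖∇f_μ(x)‖² + (μ² L² (d + 6)³)/2, where f_μ is the Gaussian smoothing of f. -/

import Mathlib

open MeasureTheory Real

lemma gb_onedim_ptbd (t : ℝ) : Real.exp (-t ^ 2 / 2) * |t| ≤ Real.exp (-t ^ 2 / 4) := by
  have h1 : |t| ≤ Real.exp (t ^ 2 / 4) := by
    have h2 : |t| ≤ t ^ 2 / 4 + 1 := by nlinarith [sq_nonneg (|t| - 2), sq_abs t]
    have h3 := Real.add_one_le_exp (t ^ 2 / 4)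
    linarith
  calc Real.exp (-t ^ 2 / 2) * |t| ≤ Real.exp (-t ^ 2 / 2) * Real.exp (t ^ 2 / 4) :=
        mul_le_mul_of_nonneg_left h1 (Real.exp_nonneg _)
    _ = Real.exp (-t ^ 2 / 4) := by rw [← Real.exp_add]; ring_nf

lemma gb_onedim_int : ∫ t : ℝ, Real.exp (-t ^ 2 / 2) = Real.sqrt (2 * π) := by
  have h := integral_gaussian (1 / 2)
  simp_rw [show ∀ t : ℝ, -(1 / 2 : ℝ) * t ^ 2 = -t ^ 2 / 2 from fun t => by ring] at h
  rw [h]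
  rw [show π / (1 / 2) = 2 * π by ring]

lemma gb_onedim_integrable : Integrable (fun t : ℝ => Real.exp (-t ^ 2 / 2)) := by
  have h := integrable_exp_neg_mul_sq (show (0:ℝ) < 1/2 by norm_num)
  simp_rw [show ∀ t : ℝ, -(1 / 2 : ℝ) * t ^ 2 = -t ^ 2 / 2 from fun t => by ring] at h
  exact h

lemma gb_onedim_integrable4 : Integrable (fun t : ℝ => Real.exp (-t ^ 2 / 4)) := by
  have h := integrable_exp_neg_mul_sq (show (0:ℝ) < 1/4 by norm_num)
  simp_rw [show ∀ t : ℝ, -(1 / 4 : ℝ) * t ^ 2 = -t ^ 2 / 4 from fun t => by ring] at h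
  exact h

lemma gb_onedim_abs_integrable : Integrable (fun t : ℝ => Real.exp (-t ^ 2 / 2) * |t|) := by
  refine gb_onedim_integrable4.mono ?_ (Filter.Eventually.of_forall fun t => ?_)
  · exact (Real.continuous_exp.comp (by continuity)).mul (continuous_abs) |>.aestronglyMeasurable
  · rw [Real.norm_eq_abs, Real.norm_eq_abs, abs_of_nonneg (by positivity),
      abs_of_nonneg (Real.exp_nonneg _)]
    exact gb_onedim_ptbd t

lemma gb_onedim_abs_int_le :
    ∫ t : ℝ, Real.exp (-t ^ 2 / 2) * |t| ≤ Real.sqrt 2 * Real.sqrt (2 * π) := by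
  have h1 : ∫ t : ℝ, Real.exp (-t ^ 2 / 2) * |t| ≤ ∫ t : ℝ, Real.exp (-t ^ 2 / 4) :=
    integral_mono gb_onedim_abs_integrable gb_onedim_integrable4 gb_onedim_ptbd
  have h2 : ∫ t : ℝ, Real.exp (-t ^ 2 / 4) = Real.sqrt (4 * π) := by
    have h := integral_gaussian (1 / 4)
    simp_rw [show ∀ t : ℝ, -(1 / 4 : ℝ) * t ^ 2 = -t ^ 2 / 4 from fun t => by ring] at h
    rw [h, show π / (1 / 4) = 4 * π by ring]
  have h3 : Real.sqrt (4 * π) = Real.sqrt 2 * Real.sqrt (2 * π) := by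
    rw [← Real.sqrt_mul (by norm_num)]; ring_nf
  linarith

lemma gb_eucl_integrable (d : ℕ) {b : ℝ} (hb : 0 < b) :
    Integrable (fun u : EuclideanSpace ℝ (Fin d) => Real.exp (-b * ‖u‖ ^ 2)) := by
  have e := EuclideanSpace.volume_preserving_symm_measurableEquiv_toLp (Fin d)
  rw [← (e.symm).integrable_comp_emb (MeasurableEquiv.measurableEmbedding _)]
  have heq : ((fun u : EuclideanSpace ℝ (Fin d) => Real.exp (-b * ‖u‖ ^ 2)) ∘
      (MeasurableEquiv.toLp 2 (Fin d → ℝ)).symm.symm) =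
      fun y : Fin d → ℝ => ∏ i, Real.exp (-b * (y i) ^ 2) := by
    ext y
    simp only [Function.comp_apply, ← Real.exp_sum]
    congr 1
    rw [EuclideanSpace.norm_eq, Real.sq_sqrt (by positivity)]
    simp [Finset.mul_sum, MeasurableEquiv.symm_symm, MeasurableEquiv.coe_toLp, sq_abs]
  rw [heq]
  exact Integrable.fintype_prod (fun _ => integrable_exp_neg_mul_sq hb)

lemma gb_eucl_int (d : ℕ) :
    ∫ u : EuclideanSpace ℝ (Fin d), Real.exp (-‖u‖ ^ 2 / 2) = Real.sqrt (2 * π) ^ d := by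
  have h := GaussianFourier.integral_rexp_neg_mul_sq_norm
    (V := EuclideanSpace ℝ (Fin d)) (show (0:ℝ) < 1/2 by norm_num)
  simp_rw [show ∀ t : ℝ, -(1 / 2 : ℝ) * t = -t / 2 from fun t => by ring] at h
  rw [h, finrank_euclideanSpace_fin, show π / (1/2:ℝ) = 2 * π by ring]
  rw [show ((d : ℝ) / 2) = (1/2 : ℝ) * d by ring, Real.rpow_mul (by positivity),
    Real.rpow_natCast, ← Real.sqrt_eq_rpow]

lemma gb_coord_moment (d : ℕ) (j : Fin d) :
    ∫ u : EuclideanSpace ℝ (Fin d), Real.exp (-‖u‖ ^ 2 / 2) * |u j| ≤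
      Real.sqrt 2 * Real.sqrt (2 * π) ^ d := by
  have e := (EuclideanSpace.volume_preserving_symm_measurableEquiv_toLp (Fin d)).symm
  set F : Fin d → ℝ → ℝ := fun i t => Real.exp (-t ^ 2 / 2) * (if i = j then |t| else 1) with hF
  have key : ∫ u : EuclideanSpace ℝ (Fin d), Real.exp (-‖u‖ ^ 2 / 2) * |u j| =
      ∏ i, ∫ t : ℝ, F i t := by
    rw [← MeasureTheory.integral_fintype_prod_volume_eq_prod (f := F)]
    rw [← e.integral_comp (MeasurableEquiv.measurableEmbedding _)
      (fun u : EuclideanSpace ℝ (Fin d) => Real.exp (-‖u‖ ^ 2 / 2) * |u j|)]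
    congr 1
    ext y
    have hn : ‖((MeasurableEquiv.toLp 2 (Fin d → ℝ)).symm.symm y : EuclideanSpace ℝ (Fin d))‖ ^ 2
        = ∑ i, (y i) ^ 2 := by
      rw [EuclideanSpace.norm_eq, Real.sq_sqrt (by positivity)]
      simp [MeasurableEquiv.symm_symm, MeasurableEquiv.coe_toLp, sq_abs]
    have hc : ∀ i, ((MeasurableEquiv.toLp 2 (Fin d → ℝ)).symm.symm y :
        EuclideanSpace ℝ (Fin d)) i = y i := by
      intro i; simp [MeasurableEquiv.symm_symm, MeasurableEquiv.coe_toLp]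
    rw [hn, hc]
    simp only [hF]
    rw [Finset.prod_mul_distrib, ← Real.exp_sum]
    congr 2
    · rw [eq_comm, ← Finset.sum_div, ← Finset.sum_neg_distrib]
    · simp
  rw [key]
  have hints : ∀ i, ∫ t : ℝ, F i t = if i = j then ∫ t : ℝ, Real.exp (-t ^ 2 / 2) * |t|
      else Real.sqrt (2 * π) := by
    intro i
    by_cases h : i = j <;> simp [hF, h, gb_onedim_int]
  rw [← Finset.mul_prod_erase Finset.univ _ (Finset.mem_univ j)]
  have h1 : ∏ i ∈ Finset.univ.erase j, ∫ t : ℝ, F i t = Real.sqrt (2 * π) ^ (d - 1) := by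
    rw [Finset.prod_congr rfl (fun i hi => by
      rw [hints i, if_neg (Finset.ne_of_mem_erase hi)]), Finset.prod_const,
      Finset.card_erase_of_mem (Finset.mem_univ j), Finset.card_univ, Fintype.card_fin]
  rw [h1, hints j, if_pos rfl]
  have h2 : (0:ℝ) ≤ Real.sqrt (2 * π) ^ (d - 1) := by positivity
  calc (∫ t : ℝ, Real.exp (-t ^ 2 / 2) * |t|) * Real.sqrt (2 * π) ^ (d - 1)
      ≤ (Real.sqrt 2 * Real.sqrt (2 * π)) * Real.sqrt (2 * π) ^ (d - 1) :=
        mul_le_mul_of_nonneg_right gb_onedim_abs_int_le h2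
    _ = Real.sqrt 2 * (Real.sqrt (2 * π) * Real.sqrt (2 * π) ^ (d - 1)) := by ring
    _ = Real.sqrt 2 * Real.sqrt (2 * π) ^ d := by
        rw [← pow_succ', Nat.sub_add_cancel j.pos]

lemma gb_pt (t s : ℝ) (hs : 0 ≤ s) (hst : s ≤ t) :
    Real.exp (-t ^ 2 / 2) * s ≤ Real.exp (-(1/4) * t ^ 2) := by
  have h1 : s ≤ Real.exp (t ^ 2 / 4) := by
    have h2 : s ≤ t ^ 2 / 4 + 1 := by nlinarith [sq_nonneg (t - 2)]
    linarith [Real.add_one_le_exp (t ^ 2 / 4)]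
  calc Real.exp (-t ^ 2 / 2) * s ≤ Real.exp (-t ^ 2 / 2) * Real.exp (t ^ 2 / 4) :=
        mul_le_mul_of_nonneg_left h1 (Real.exp_nonneg _)
    _ = Real.exp (-(1/4) * t ^ 2) := by rw [← Real.exp_add]; ring_nf

lemma gb_coord_le_norm (d : ℕ) (j : Fin d) (u : EuclideanSpace ℝ (Fin d)) : |u j| ≤ ‖u‖ := by
  rw [EuclideanSpace.norm_eq, show |u j| = Real.sqrt ((u j) ^ 2) by rw [Real.sqrt_sq_eq_abs]]
  apply Real.sqrt_le_sqrt
  rw [show (u j) ^ 2 = ‖u j‖ ^ 2 by rw [Real.norm_eq_abs, sq_abs]]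
  exact Finset.single_le_sum (f := fun i => ‖u i‖ ^ 2) (fun i _ => by positivity) (Finset.mem_univ j)

lemma gb_norm_integrable (d : ℕ) :
    Integrable (fun u : EuclideanSpace ℝ (Fin d) => Real.exp (-‖u‖ ^ 2 / 2) * ‖u‖) := by
  refine (gb_eucl_integrable d (show (0:ℝ) < 1/4 by norm_num)).mono ?_
    (Filter.Eventually.of_forall fun u => ?_)
  · exact ((Real.continuous_exp.comp (by continuity)).mul continuous_norm).aestronglyMeasurable
  · rw [Real.norm_eq_abs, Real.norm_eq_abs, abs_of_nonneg (by positivity),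
      abs_of_nonneg (Real.exp_nonneg _)]
    exact gb_pt ‖u‖ ‖u‖ (norm_nonneg u) le_rfl

lemma gb_coord_integrable (d : ℕ) (j : Fin d) :
    Integrable (fun u : EuclideanSpace ℝ (Fin d) => Real.exp (-‖u‖ ^ 2 / 2) * |u j|) := by
  refine (gb_eucl_integrable d (show (0:ℝ) < 1/4 by norm_num)).mono ?_
    (Filter.Eventually.of_forall fun u => ?_)
  · refine ((Real.continuous_exp.comp (by continuity)).mul ?_).aestronglyMeasurable
    exact ((EuclideanSpace.proj j).continuous).abs
  · rw [Real.norm_eq_abs, Real.norm_eq_abs, abs_of_nonneg (by positivity),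
      abs_of_nonneg (Real.exp_nonneg _)]
    exact gb_pt ‖u‖ (|u j|) (abs_nonneg _) (gb_coord_le_norm d j u)

lemma gb_norm_le_sum (d : ℕ) (u : EuclideanSpace ℝ (Fin d)) : ‖u‖ ≤ ∑ j, |u j| := by
  rw [EuclideanSpace.norm_eq]
  have h1 : ∑ i, ‖u i‖ ^ 2 ≤ (∑ j, |u j|) ^ 2 := by
    simp_rw [Real.norm_eq_abs]
    exact Finset.sum_sq_le_sq_sum_of_nonneg (fun i _ => abs_nonneg _)
  calc Real.sqrt (∑ i, ‖u i‖ ^ 2) ≤ Real.sqrt ((∑ j, |u j|) ^ 2) := Real.sqrt_le_sqrt h1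
    _ = ∑ j, |u j| := Real.sqrt_sq (Finset.sum_nonneg fun i _ => abs_nonneg _)

lemma gb_moment (d : ℕ) :
    ∫ u : EuclideanSpace ℝ (Fin d), Real.exp (-‖u‖ ^ 2 / 2) * ‖u‖ ≤
      Real.sqrt 2 * d * Real.sqrt (2 * π) ^ d := by
  have hint2 : Integrable (fun u : EuclideanSpace ℝ (Fin d) =>
      ∑ j, Real.exp (-‖u‖ ^ 2 / 2) * |u j|) :=
    integrable_finset_sum _ (fun j _ => gb_coord_integrable d j)
  calc ∫ u : EuclideanSpace ℝ (Fin d), Real.exp (-‖u‖ ^ 2 / 2) * ‖u‖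
      ≤ ∫ u : EuclideanSpace ℝ (Fin d), ∑ j, Real.exp (-‖u‖ ^ 2 / 2) * |u j| := by
        refine integral_mono (gb_norm_integrable d) hint2 (fun u => ?_)
        rw [← Finset.mul_sum]
        exact mul_le_mul_of_nonneg_left (gb_norm_le_sum d u) (Real.exp_nonneg _)
    _ = ∑ j, ∫ u : EuclideanSpace ℝ (Fin d), Real.exp (-‖u‖ ^ 2 / 2) * |u j| :=
        integral_finset_sum _ (fun j _ => gb_coord_integrable d j)
    _ ≤ ∑ _j : Fin d, Real.sqrt 2 * Real.sqrt (2 * π) ^ d :=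
        Finset.sum_le_sum (fun j _ => gb_coord_moment d j)
    _ = Real.sqrt 2 * d * Real.sqrt (2 * π) ^ d := by
        rw [Finset.sum_const, Finset.card_univ, Fintype.card_fin, nsmul_eq_mul]; ring

/-- If `f : ℝ^d → ℝ` is L-smooth, then
`‖∇f(x)‖² ≤ 2‖∇f_μ(x)‖² + μ² L² (d+6)³ / 2` for all `x`. -/
theorem gradient_bound_via_smoothed_gradient
    (d : ℕ) (f : EuclideanSpace ℝ (Fin d) → ℝ)
    (f' : EuclideanSpace ℝ (Fin d) → EuclideanSpace ℝ (Fin d))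
    (hf : ∀ x, HasGradientAt f (f' x) x)
    (L : ℝ) (hL : 0 ≤ L)
    (hlip : ∀ x y, ‖f' x - f' y‖ ≤ L * ‖x - y‖)
    (μ : ℝ) (hμ : 0 < μ)
    (hint : ∀ x : EuclideanSpace ℝ (Fin d),
      Integrable (fun u : EuclideanSpace ℝ (Fin d) =>
        Real.exp (-‖u‖ ^ 2 / 2) • f' (x + μ • u)))
    (fμ' : EuclideanSpace ℝ (Fin d) → EuclideanSpace ℝ (Fin d))
    (hfμ' : ∀ x, fμ' x = (2 * π) ^ (-(d : ℝ) / 2) •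
      ∫ u : EuclideanSpace ℝ (Fin d), Real.exp (-‖u‖ ^ 2 / 2) • f' (x + μ • u)) :
    ∀ x, ‖f' x‖ ^ 2 ≤ 2 * ‖fμ' x‖ ^ 2 + μ ^ 2 * L ^ 2 * ((d : ℝ) + 6) ^ 3 / 2 := by
  intro x
  set S : ℝ := Real.sqrt (2 * π) ^ d with hSdef
  have hS : 0 < S := by positivity
  set I : EuclideanSpace ℝ (Fin d) :=
    ∫ u : EuclideanSpace ℝ (Fin d), Real.exp (-‖u‖ ^ 2 / 2) • f' (x + μ • u) with hI
  have hgint : Integrable (fun u : EuclideanSpace ℝ (Fin d) => Real.exp (-‖u‖ ^ 2 / 2)) := by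
    have h := gb_eucl_integrable d (show (0:ℝ) < 1/2 by norm_num)
    simp_rw [show ∀ t : ℝ, -(1/2 : ℝ) * t = -t / 2 from fun t => by ring] at h
    exact h
  have hc : ((2 * π) ^ (-(d : ℝ) / 2) : ℝ) = S⁻¹ := by
    rw [show (-(d : ℝ) / 2) = -((d : ℝ) / 2) by ring, Real.rpow_neg (by positivity)]
    congr 1
    rw [show ((d : ℝ) / 2) = (1/2 : ℝ) * d by ring, Real.rpow_mul (by positivity),
      Real.rpow_natCast, ← Real.sqrt_eq_rpow]
  have hJ : (∫ u : EuclideanSpace ℝ (Fin d), Real.exp (-‖u‖ ^ 2 / 2) • f' x)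
      = S • f' x := by
    rw [integral_smul_const, gb_eucl_int d]
  have hdiff : (∫ u : EuclideanSpace ℝ (Fin d),
      (Real.exp (-‖u‖ ^ 2 / 2) • f' (x + μ • u) - Real.exp (-‖u‖ ^ 2 / 2) • f' x))
      = I - S • f' x := by
    rw [integral_sub (hint x) (hgint.smul_const (f' x)), hJ]
  have hmono : ∀ u : EuclideanSpace ℝ (Fin d),
      ‖Real.exp (-‖u‖ ^ 2 / 2) • f' (x + μ • u) - Real.exp (-‖u‖ ^ 2 / 2) • f' x‖ ≤
      (L * μ) * (Real.exp (-‖u‖ ^ 2 / 2) * ‖u‖) := by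
    intro u
    rw [← smul_sub, norm_smul, Real.norm_eq_abs, abs_of_nonneg (Real.exp_nonneg _)]
    have h := hlip (x + μ • u) x
    rw [add_sub_cancel_left, norm_smul, Real.norm_eq_abs, abs_of_pos hμ] at h
    calc Real.exp (-‖u‖ ^ 2 / 2) * ‖f' (x + μ • u) - f' x‖
        ≤ Real.exp (-‖u‖ ^ 2 / 2) * (L * (μ * ‖u‖)) :=
          mul_le_mul_of_nonneg_left h (Real.exp_nonneg _)
      _ = (L * μ) * (Real.exp (-‖u‖ ^ 2 / 2) * ‖u‖) := by ring
  have hnorm : ‖I - S • f' x‖ ≤ (L * μ) * (Real.sqrt 2 * d * S) := by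
    calc ‖I - S • f' x‖
        = ‖∫ u : EuclideanSpace ℝ (Fin d),
            (Real.exp (-‖u‖ ^ 2 / 2) • f' (x + μ • u) - Real.exp (-‖u‖ ^ 2 / 2) • f' x)‖ := by
          rw [hdiff]
      _ ≤ ∫ u : EuclideanSpace ℝ (Fin d),
            ‖Real.exp (-‖u‖ ^ 2 / 2) • f' (x + μ • u) - Real.exp (-‖u‖ ^ 2 / 2) • f' x‖ :=
          norm_integral_le_integral_norm _
      _ ≤ ∫ u : EuclideanSpace ℝ (Fin d), (L * μ) * (Real.exp (-‖u‖ ^ 2 / 2) * ‖u‖) := by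
          refine integral_mono_of_nonneg (Filter.Eventually.of_forall fun u => norm_nonneg _)
            ((gb_norm_integrable d).const_mul _) (Filter.Eventually.of_forall hmono)
      _ = (L * μ) * ∫ u : EuclideanSpace ℝ (Fin d), Real.exp (-‖u‖ ^ 2 / 2) * ‖u‖ :=
          integral_const_mul _ _
      _ ≤ (L * μ) * (Real.sqrt 2 * d * S) :=
          mul_le_mul_of_nonneg_left (gb_moment d) (by positivity)
  have hrepr : f' x - fμ' x = S⁻¹ • (S • f' x - I) := by
    rw [hfμ' x, hc, ← hI, smul_sub, smul_smul, inv_mul_cancel₀ hS.ne', one_smul]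
  have hkey : ‖f' x - fμ' x‖ ≤ L * μ * (Real.sqrt 2 * d) := by
    rw [hrepr, norm_smul, Real.norm_eq_abs, abs_of_pos (inv_pos.2 hS), norm_sub_rev]
    calc S⁻¹ * ‖I - S • f' x‖ ≤ S⁻¹ * ((L * μ) * (Real.sqrt 2 * d * S)) :=
          mul_le_mul_of_nonneg_left hnorm (by positivity)
      _ = L * μ * (Real.sqrt 2 * d) := by field_simp
  have ha : ‖f' x‖ ≤ ‖fμ' x‖ + L * μ * (Real.sqrt 2 * d) := by
    have h := norm_sub_norm_le (f' x) (fμ' x)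
    linarith
  have h2 : Real.sqrt 2 ^ 2 = 2 := Real.sq_sqrt (by norm_num)
  have hd : (0:ℝ) ≤ (d:ℝ) := Nat.cast_nonneg d
  have hcube : 8 * (d:ℝ) ^ 2 ≤ ((d:ℝ) + 6) ^ 3 := by nlinarith
  have hB2 : (L * μ * (Real.sqrt 2 * (d:ℝ))) ^ 2 = 2 * (L ^ 2 * μ ^ 2 * (d:ℝ) ^ 2) := by
    rw [mul_pow, mul_pow, mul_pow, h2]; ring
  have h8 : μ ^ 2 * L ^ 2 * (8 * (d:ℝ) ^ 2) ≤ μ ^ 2 * L ^ 2 * ((d:ℝ) + 6) ^ 3 :=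
    mul_le_mul_of_nonneg_left hcube (by positivity)
  have hBnn : 0 ≤ L * μ * (Real.sqrt 2 * (d:ℝ)) := by positivity
  nlinarith [ha, hB2, h8, norm_nonneg (f' x), norm_nonneg (fμ' x), hBnn,
    sq_nonneg (‖fμ' x‖ - L * μ * (Real.sqrt 2 * (d:ℝ)))]
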